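/- arXiv:2011.00205 — 2 statements merged into one kernel-verified Lean document; each statement's English description precedes it below -/
import Mathlib

section
/- Let g : [ν₁, ν_M] → ℝ be convex, continuous, and piecewise affine with slope L_i on each (ν_i, ν_{i+1}), where L₁ ≤ … ≤ L_{M−1}. For 0 < γ < min_i (ν_{i+1} − ν_i), let g_γ be the C¹ underestimator obtained by integrating the derivative g'_γ, which equals L_{i−1} + ((L_i − L_{i−1})/γ)(w − ν_i) on [ν_i, ν_i + γ) for i = 2,…,M−1 and L_i on [ν_i + γ, ν_{i+1}), with g_γ(ν₁) = g(ν₁). Then sup_{u ∈ [ν₁,ν_M]} (g(u) − g_γ(u)) = (1/2)(L_{M−1} − L₁)γ and g_γ ≤ g everywhere on [ν₁, ν_M]. -/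
open MeasureTheory intervalIntegral

lemma helper_int_affine (a b c m : ℝ) :
    ∫ w in a..b, (c + m * (w - a)) = c * (b - a) + m / 2 * (b - a)^2 := by
  have h1 : ∀ w : ℝ, c + m * (w - a) = (c - m * a) + m * w := by intro w; ring
  simp only [h1]
  rw [intervalIntegral.integral_add (f := fun _ => c - m * a) (g := fun w => m * w)
    (intervalIntegrable_const)
    ((continuous_const.mul continuous_id).intervalIntegrable _ _)]
  rw [intervalIntegral.integral_const, intervalIntegral.integral_const_mul, integral_id]
  simp [smul_eq_mul]; ring

lemma helper_integral_congr {gd f : ℝ → ℝ} {a b : ℝ} (hab : a ≤ b)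
    (h : ∀ w ∈ Set.Icc a b, gd w = f w) :
    ∫ w in a..b, gd w = ∫ w in a..b, f w := by
  apply intervalIntegral.integral_congr
  intro w hw
  exact h w (by rwa [Set.uIcc_of_le hab] at hw)

lemma helper_ii {gd f : ℝ → ℝ} {a b : ℝ} (hf : Continuous f) (hab : a ≤ b)
    (h : ∀ w ∈ Set.Icc a b, gd w = f w) :
    IntervalIntegrable gd volume a b := by
  apply (hf.intervalIntegrable a b).congr
  intro w hw
  exact (h w (Set.uIoc_subset_uIcc.trans (Set.uIcc_of_le hab).subset hw)).symm

lemma helper_ramp_bounds (A B γ t : ℝ) (hγ : 0 < γ) (hAB : A ≤ B) (ht0 : 0 ≤ t) (htγ : t ≤ γ) :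
    0 ≤ B * t - (A * t + (B - A)/γ/2 * t^2) ∧
    B * t - (A * t + (B - A)/γ/2 * t^2) ≤ (B - A) * γ / 2 := by
  have hm0 : 0 ≤ (B - A)/γ := div_nonneg (by linarith) hγ.le
  have hm : (B - A)/γ * γ = B - A := div_mul_cancel₀ _ hγ.ne'
  set m := (B - A)/γ with hmdef
  constructor
  · nlinarith [mul_nonneg (mul_nonneg hm0 ht0) (by linarith : 0 ≤ 2*γ - t)]
  · nlinarith [mul_nonneg hm0 (sq_nonneg (γ - t))]

theorem stmt_14 (n : ℕ) (hn : 0 < n) (ν : Fin (n + 1) → ℝ)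
    (hν : StrictMono ν) (L : Fin n → ℝ) (hL : Monotone L)
    (g : ℝ → ℝ)
    (hgc : ContinuousOn g (Set.Icc (ν 0) (ν (Fin.last n))))
    (hgcv : ConvexOn ℝ (Set.Icc (ν 0) (ν (Fin.last n))) g)
    (hgaff : ∀ i : Fin n, ∀ u ∈ Set.Icc (ν i.castSucc) (ν i.succ),
      g u = g (ν i.castSucc) + L i * (u - ν i.castSucc))
    (γ : ℝ) (hγ0 : 0 < γ)
    (hγ : ∀ i : Fin n, γ < ν i.succ - ν i.castSucc)
    (gd : ℝ → ℝ)
    (hgd0 : ∀ w ∈ Set.Ico (ν 0) (ν ⟨1, by omega⟩), gd w = L ⟨0, hn⟩)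
    (hgdmid : ∀ (i : ℕ) (h : i + 1 < n),
      (∀ w ∈ Set.Ico (ν ⟨i + 1, by omega⟩) (ν ⟨i + 1, by omega⟩ + γ),
        gd w = L ⟨i, by omega⟩
          + (L ⟨i + 1, h⟩ - L ⟨i, by omega⟩) / γ * (w - ν ⟨i + 1, by omega⟩)) ∧
      (∀ w ∈ Set.Ico (ν ⟨i + 1, by omega⟩ + γ) (ν ⟨i + 2, by omega⟩),
        gd w = L ⟨i + 1, h⟩))
    (hgdend : gd (ν (Fin.last n)) = L ⟨n - 1, by omega⟩)
    (gγ : ℝ → ℝ)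
    (hgγ : ∀ u : ℝ, gγ u = g (ν 0) + ∫ w in (ν 0)..u, gd w) :
    (∀ u ∈ Set.Icc (ν 0) (ν (Fin.last n)), gγ u ≤ g u) ∧
    sSup ((fun u => g u - gγ u) '' Set.Icc (ν 0) (ν (Fin.last n)))
      = 1 / 2 * (L ⟨n - 1, by omega⟩ - L ⟨0, hn⟩) * γ := by
  -- ℕ-indexed knots and slopes
  set V : ℕ → ℝ := fun k => ν ⟨min k n, Nat.lt_succ_of_le (Nat.min_le_right k n)⟩ with hVdef
  set Λ : ℕ → ℝ :=
    fun k => L ⟨min k (n-1), lt_of_le_of_lt (Nat.min_le_right k (n-1)) (by omega)⟩ with hΛdef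
  have hVk : ∀ (k : ℕ) (h : k ≤ n), V k = ν ⟨k, by omega⟩ := by
    intro k h; simp [hVdef, Nat.min_eq_left h]
  have hΛk : ∀ (k : ℕ) (h : k < n), Λ k = L ⟨k, h⟩ := by
    intro k h; simp [hΛdef, Nat.min_eq_left (by omega : k ≤ n - 1)]
  have hV0 : ν 0 = V 0 := by rw [hVk 0 (by omega)]; rfl
  have hVlast : ν (Fin.last n) = V n := by rw [hVk n le_rfl]; rfl
  have Vmono : Monotone V := by
    intro a b hab
    exact hν.monotone (by simp [Fin.mk_le_mk]; omega)
  have Vlt : ∀ k, k < n → V k < V (k+1) := by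
    intro k hk
    rw [hVk k (by omega), hVk (k+1) (by omega)]
    exact hν (by simp [Fin.mk_lt_mk])
  have Λmono : Monotone Λ := by
    intro a b hab
    exact hL (by simp [Fin.mk_le_mk]; omega)
  have hγ' : ∀ k, k < n → γ < V (k+1) - V k := by
    intro k hk
    rw [hVk k (by omega), hVk (k+1) (by omega)]
    exact hγ ⟨k, hk⟩
  have haff : ∀ (k : ℕ) (h : k < n), ∀ u ∈ Set.Icc (V k) (V (k+1)),
      g u = g (V k) + Λ k * (u - V k) := by
    intro k h u hu
    rw [hVk k (by omega), hVk (k+1) (by omega), hΛk k h] at *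
    exact hgaff ⟨k, h⟩ u hu
  -- closed-interval descriptions of gd
  have hA : ∀ w ∈ Set.Icc (V 0) (V 1), gd w = Λ 0 := by
    intro w hw
    rw [hΛk 0 hn]
    rcases lt_or_eq_of_le hw.2 with hlt | heq
    · refine hgd0 w ⟨?_, ?_⟩
      · rw [hV0]; exact hw.1
      · rw [← hVk 1 hn]; exact hlt
    · rcases Nat.lt_or_ge 1 n with h2 | h2
      · have hmid := (hgdmid 0 h2).1
        simp only [zero_add] at hmid
        rw [← hVk 1 (by omega)] at hmid
        have := hmid w ⟨heq.ge, by linarith⟩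
        rw [this, heq]; ring
      · have hn1 : n = 1 := by omega
        have hwl : w = ν (Fin.last n) := by rw [heq, hVlast, hn1]
        rw [hwl, hgdend]
        exact congrArg L (Fin.mk_eq_mk.mpr (by omega))
  have hB : ∀ (i : ℕ), 1 ≤ i → i ≤ n - 1 → ∀ w ∈ Set.Icc (V i) (V i + γ),
      gd w = Λ (i-1) + (Λ i - Λ (i-1)) / γ * (w - V i) := by
    intro i h1 h2 w hw
    obtain ⟨j, rfl⟩ : ∃ j, i = j + 1 := ⟨i - 1, by omega⟩
    have hj : j + 1 < n := by omega
    have hmid := (hgdmid j hj).1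
    have hflat := (hgdmid j hj).2
    rw [← hVk (j+1) (by omega)] at hmid hflat
    rw [← hVk (j+2) (by omega)] at hflat
    simp only [Nat.add_sub_cancel]
    rw [hΛk j (by omega), hΛk (j+1) hj]
    rcases lt_or_eq_of_le hw.2 with hlt | heq
    · rw [hmid w ⟨hw.1, hlt⟩, hVk (j+1) (by omega)]
    · have hlt2 : w < V (j + 2) := by
        have := hγ' (j+1) hj
        rw [heq]; linarith
      rw [hflat w ⟨heq.ge, hlt2⟩, heq]
      field_simp
      ring
  have hC : ∀ (i : ℕ), 1 ≤ i → i ≤ n - 1 → ∀ w ∈ Set.Icc (V i + γ) (V (i+1)),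
      gd w = Λ i := by
    intro i h1 h2 w hw
    obtain ⟨j, rfl⟩ : ∃ j, i = j + 1 := ⟨i - 1, by omega⟩
    have hj : j + 1 < n := by omega
    have hflat := (hgdmid j hj).2
    rw [← hVk (j+1) (by omega)] at hflat
    rw [← hVk (j+2) (by omega)] at hflat
    rw [hΛk (j+1) hj]
    rcases lt_or_eq_of_le hw.2 with hlt | heq
    · exact hflat w ⟨hw.1, hlt⟩
    · rcases Nat.lt_or_ge (j + 2) n with h3 | h3
      · have hmid2 := (hgdmid (j+1) h3).1
        rw [← hVk (j+2) (by omega)] at hmid2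
        have := hmid2 w ⟨heq.ge, by linarith⟩
        rw [this, heq, hVk (j+2) (by omega)]
        ring_nf
      · have hwl : w = ν (Fin.last n) := by
          rw [heq, hVlast]; congr 1; omega
        rw [hwl, hgdend]
        exact congrArg L (Fin.mk_eq_mk.mpr (by omega))
  -- integrability
  have affcont : ∀ c m a : ℝ, Continuous (fun w : ℝ => c + m * (w - a)) :=
    fun c m a => continuous_const.add (continuous_const.mul (continuous_id.sub continuous_const))
  have iiA : IntervalIntegrable gd volume (V 0) (V 1) :=
    helper_ii continuous_const (Vlt 0 hn).le hA
  have iiB : ∀ i, 1 ≤ i → i ≤ n-1 → IntervalIntegrable gd volume (V i) (V i + γ) :=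
    fun i h1 h2 => helper_ii (affcont _ _ _) (by linarith) (hB i h1 h2)
  have iiC : ∀ i, 1 ≤ i → i ≤ n-1 → IntervalIntegrable gd volume (V i + γ) (V (i+1)) :=
    fun i h1 h2 => helper_ii continuous_const
      (by have := hγ' i (by omega); linarith) (hC i h1 h2)
  have iiseg : ∀ i, i < n → IntervalIntegrable gd volume (V i) (V (i+1)) := by
    intro i hi
    rcases Nat.eq_zero_or_pos i with rfl | h1
    · exact iiA
    · exact (iiB i h1 (by omega)).trans (iiC i h1 (by omega))
  have iiknot : ∀ k, k ≤ n → IntervalIntegrable gd volume (V 0) (V k) := by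
    intro k
    induction k with
    | zero => intro _; exact IntervalIntegrable.refl
    | succ k ih => intro hk; exact (ih (by omega)).trans (iiseg k (by omega))
  -- integral values on pieces
  have IA : ∀ u ∈ Set.Icc (V 0) (V 1), ∫ w in (V 0)..u, gd w = Λ 0 * (u - V 0) := by
    intro u hu
    rw [helper_integral_congr hu.1 (fun w hw => hA w ⟨hw.1, le_trans hw.2 hu.2⟩)]
    simp [intervalIntegral.integral_const, smul_eq_mul, mul_comm]
  have IB : ∀ i, 1 ≤ i → i ≤ n-1 → ∀ u ∈ Set.Icc (V i) (V i + γ),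
      ∫ w in (V i)..u, gd w
        = Λ (i-1) * (u - V i) + (Λ i - Λ (i-1))/γ/2 * (u - V i)^2 := by
    intro i h1 h2 u hu
    rw [helper_integral_congr hu.1 (fun w hw => hB i h1 h2 w ⟨hw.1, le_trans hw.2 hu.2⟩),
        helper_int_affine]
  have IC : ∀ i, 1 ≤ i → i ≤ n-1 → ∀ u ∈ Set.Icc (V i + γ) (V (i+1)),
      ∫ w in (V i + γ)..u, gd w = Λ i * (u - (V i + γ)) := by
    intro i h1 h2 u hu
    rw [helper_integral_congr hu.1 (fun w hw => hC i h1 h2 w ⟨hw.1, le_trans hw.2 hu.2⟩)]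
    simp [intervalIntegral.integral_const, smul_eq_mul, mul_comm]
  -- splitting integrals
  have split1 : ∀ i, 1 ≤ i → i ≤ n - 1 → ∀ u, V i ≤ u → u ≤ V i + γ →
      ∫ w in (V 0)..u, gd w = (∫ w in (V 0)..(V i), gd w) + ∫ w in (V i)..u, gd w := by
    intro i h1 h2 u hu1 hu2
    exact (intervalIntegral.integral_add_adjacent_intervals (iiknot i (by omega))
      (helper_ii (affcont _ _ _) hu1
        (fun w hw => hB i h1 h2 w ⟨hw.1, le_trans hw.2 hu2⟩))).symm
  have split2 : ∀ i, 1 ≤ i → i ≤ n - 1 → ∀ u, V i + γ ≤ u → u ≤ V (i+1) →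
      ∫ w in (V 0)..u, gd w = (∫ w in (V 0)..(V i), gd w) + (∫ w in (V i)..(V i + γ), gd w)
        + ∫ w in (V i + γ)..u, gd w := by
    intro i h1 h2 u hu1 hu2
    have s1 : (∫ w in (V 0)..(V i), gd w) + (∫ w in (V i)..(V i + γ), gd w)
        = ∫ w in (V 0)..(V i + γ), gd w :=
      intervalIntegral.integral_add_adjacent_intervals (iiknot i (by omega)) (iiB i h1 h2)
    rw [s1]
    exact (intervalIntegral.integral_add_adjacent_intervals
      ((iiknot i (by omega)).trans (iiB i h1 h2))
      (helper_ii continuous_const hu1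
        (fun w hw => hC i h1 h2 w ⟨hw.1, le_trans hw.2 hu2⟩))).symm
  -- values at knots
  have dknot : ∀ k, 1 ≤ k → k ≤ n →
      g (V k) - g (V 0) - (∫ w in (V 0)..(V k), gd w) = (Λ (k-1) - Λ 0) * γ / 2 := by
    intro k
    induction k with
    | zero => omega
    | succ k ih =>
      intro _ hk
      rcases Nat.eq_zero_or_pos k with rfl | h1
      · have e1 : (∫ w in (V 0)..(V 1), gd w) = Λ 0 * (V 1 - V 0) :=
          IA (V 1) ⟨(Vlt 0 hn).le, le_rfl⟩
        have e2 : g (V 1) = g (V 0) + Λ 0 * (V 1 - V 0) :=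
          haff 0 hn (V 1) ⟨(Vlt 0 hn).le, le_rfl⟩
        simp only [Nat.add_sub_cancel] at *
        rw [e1, e2]; ring
      · have hk1 : k ≤ n - 1 := by omega
        have hkn : k < n := by omega
        have hγk := hγ' k hkn
        have ihv := ih h1 (by omega)
        have e1 := split2 k h1 hk1 (V (k+1)) (by linarith) le_rfl
        have e2 := IB k h1 hk1 (V k + γ) ⟨by linarith, le_rfl⟩
        have e3 := IC k h1 hk1 (V (k+1)) ⟨by linarith, le_rfl⟩
        have e4 : g (V (k+1)) = g (V k) + Λ k * (V (k+1) - V k) :=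
          haff k hkn (V (k+1)) ⟨(Vlt k hkn).le, le_rfl⟩
        rw [show V k + γ - V k = γ by ring] at e2
        have e5 : (Λ k - Λ (k-1))/γ/2 * γ^2 = (Λ k - Λ (k-1)) * γ / 2 := by
          field_simp
        rw [e5] at e2
        simp only [Nat.add_sub_cancel]
        rw [e1, e2, e3, e4]
        linarith
  -- covering lemma
  have cover : ∀ u, V 0 ≤ u → u ≤ V n → ∃ i, i < n ∧ V i ≤ u ∧ u ≤ V (i+1) := by
    intro u h0 hu
    have aux : ∀ k, k ≤ n → u ≤ V k → k = 0 ∨ ∃ i, i < k ∧ V i ≤ u ∧ u ≤ V (i+1) := by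
      intro k
      induction k with
      | zero => intro _ _; left; rfl
      | succ k ih =>
        intro hk hu'
        right
        by_cases h : u ≤ V k
        · rcases ih (by omega) h with h0' | ⟨i, hi, ha, hb⟩
          · subst h0'
            exact ⟨0, by omega, le_antisymm h h0 ▸ le_rfl, by simpa [le_antisymm h h0] using hu'⟩
          · exact ⟨i, by omega, ha, hb⟩
        · exact ⟨k, by omega, (not_le.mp h).le, hu'⟩
    rcases aux n le_rfl hu with h0' | ⟨i, hi, ha, hb⟩
    · omega
    · exact ⟨i, hi, ha, hb⟩
  -- pointwise bounds
  have Λ0n : Λ 0 ≤ Λ (n-1) := Λmono (by omega)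
  have key : ∀ u, V 0 ≤ u → u ≤ V n →
      0 ≤ g u - g (V 0) - (∫ w in (V 0)..u, gd w) ∧
      g u - g (V 0) - (∫ w in (V 0)..u, gd w) ≤ (Λ (n-1) - Λ 0) * γ / 2 := by
    intro u h0 hun
    obtain ⟨i, hi, ha, hb⟩ := cover u h0 hun
    have haffu : g u = g (V i) + Λ i * (u - V i) := haff i hi u ⟨ha, hb⟩
    rcases Nat.eq_zero_or_pos i with rfl | h1
    · have e1 : (∫ w in (V 0)..u, gd w) = Λ 0 * (u - V 0) := IA u ⟨ha, hb⟩
      rw [e1, haffu]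
      constructor
      · linarith
      · nlinarith [hγ0.le]
    · have hi1 : i ≤ n - 1 := by omega
      have hΛi : Λ i ≤ Λ (n-1) := Λmono (by omega)
      have hΛi0 : Λ 0 ≤ Λ (i-1) := Λmono (by omega)
      have hΛii : Λ (i-1) ≤ Λ i := Λmono (by omega)
      have hdk := dknot i h1 (by omega)
      have hγi := hγ' i hi
      by_cases hc : u ≤ V i + γ
      · have e1 := split1 i h1 hi1 u ha hc
        have e2 := IB i h1 hi1 u ⟨ha, hc⟩
        rw [e1, e2, haffu]
        have ht0 : 0 ≤ u - V i := by linarith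
        have htγ : u - V i ≤ γ := by linarith
        have hrb := helper_ramp_bounds (Λ (i-1)) (Λ i) γ (u - V i) hγ0 hΛii ht0 htγ
        constructor
        · linarith [hdk, hrb.1, mul_nonneg (sub_nonneg.mpr hΛi0) hγ0.le]
        · linarith [hdk, hrb.2, mul_nonneg (sub_nonneg.mpr hΛi) hγ0.le]
      · have hc' : V i + γ ≤ u := (not_le.mp hc).le
        have e1 := split2 i h1 hi1 u hc' hb
        have e2 := IB i h1 hi1 (V i + γ) ⟨by linarith, le_rfl⟩
        have e3 := IC i h1 hi1 u ⟨hc', hb⟩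
        rw [show V i + γ - V i = γ by ring] at e2
        have e5 : (Λ i - Λ (i-1))/γ/2 * γ^2 = (Λ i - Λ (i-1)) * γ / 2 := by
          field_simp
        rw [e5] at e2
        rw [e1, e2, e3, haffu]
        constructor
        · linarith [hdk, mul_nonneg (sub_nonneg.mpr hΛi0) hγ0.le,
            mul_nonneg (sub_nonneg.mpr hΛii) hγ0.le]
        · linarith [hdk, mul_nonneg (sub_nonneg.mpr hΛi) hγ0.le]
  -- assembly
  have hgγ' : ∀ u, g u - gγ u = g u - g (V 0) - (∫ w in (V 0)..u, gd w) := by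
    intro u
    rw [hgγ u, hV0]
    ring
  constructor
  · intro u hu
    rw [hV0, hVlast] at hu
    have h2 := (key u hu.1 hu.2).1
    have h3 := hgγ' u
    linarith
  · have hΛeq : (1:ℝ) / 2 * (L ⟨n - 1, by omega⟩ - L ⟨0, hn⟩) * γ = (Λ (n-1) - Λ 0) * γ / 2 := by
      rw [hΛk (n-1) (by omega), hΛk 0 hn]
      ring
    rw [hΛeq]
    have hmem : V n ∈ Set.Icc (ν 0) (ν (Fin.last n)) := by
      rw [hV0, hVlast]; exact ⟨Vmono (by omega), le_rfl⟩
    have hdn : g (V n) - gγ (V n) = (Λ (n-1) - Λ 0) * γ / 2 := by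
      rw [hgγ' (V n)]
      exact dknot n hn le_rfl
    apply le_antisymm
    · apply Real.sSup_le
      · rintro b ⟨u, hu, rfl⟩
        rw [hV0, hVlast] at hu
        have h2 := (key u hu.1 hu.2).2
        have h3 := hgγ' u
        show g u - gγ u ≤ _
        linarith
      · nlinarith [mul_nonneg (sub_nonneg.mpr Λ0n) hγ0.le]
    · apply le_csSup
      · refine ⟨(Λ (n-1) - Λ 0) * γ / 2, ?_⟩
        rintro b ⟨u, hu, rfl⟩
        rw [hV0, hVlast] at hu
        have h2 := (key u hu.1 hu.2).2
        have h3 := hgγ' u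
        show g u - gγ u ≤ _
        linarith
      · exact ⟨V n, hmem, hdn⟩
end

section
/- Let g : ℝᵐ → ℝ be convex and continuous, let Ω be a finite measure space, and let (vⁿ)_n ⊂ L^∞(Ω, ℝᵐ) be uniformly bounded with vⁿ ⇀* v weakly-* in L^∞(Ω, ℝᵐ). Then ∫_Ω g(v(x)) dx ≤ liminf_n ∫_Ω g(vⁿ(x)) dx. -/
open MeasureTheory


lemma exists_subgrad {m : ℕ} (g : (Fin m → ℝ) → ℝ)
    (hgconv : ConvexOn ℝ Set.univ g) (hgcont : Continuous g) (q : Fin m → ℝ) :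
    ∃ b : (Fin m → ℝ) →L[ℝ] ℝ, ∀ y, b y - b q ≤ g y - g q := by
  have hSconv : Convex ℝ {p : (Fin m → ℝ) × ℝ | g p.1 < p.2} := by
    have := hgconv.convex_strict_epigraph
    simpa using this
  have hSopen : IsOpen {p : (Fin m → ℝ) × ℝ | g p.1 < p.2} :=
    isOpen_lt (by fun_prop) continuous_snd
  have hqS : ((q, g q) : (Fin m → ℝ) × ℝ) ∉ {p : (Fin m → ℝ) × ℝ | g p.1 < p.2} := by simp
  obtain ⟨f, hf⟩ := geometric_hahn_banach_open_point hSconv hSopen hqS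
  have hsplit : ∀ (y : Fin m → ℝ) (t : ℝ), f (y, t) = f (y, 0) + t * f (0, 1) := by
    intro y t
    have h : ((y, t) : (Fin m → ℝ) × ℝ) = (y, 0) + t • ((0 : Fin m → ℝ), (1 : ℝ)) := by
      simp [Prod.ext_iff]
    rw [h, map_add, f.map_smul, smul_eq_mul]
  have hcneg : f (0, 1) < 0 := by
    have h1 : f (q, g q + 1) < f (q, g q) := hf _ (by simp)
    rw [hsplit q (g q + 1), hsplit q (g q)] at h1
    nlinarith
  have key : ∀ y : Fin m → ℝ,
      f (y, 0) + g y * f (0, 1) ≤ f (q, 0) + g q * f (0, 1) := by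
    intro y
    have h2 : ∀ s : ℝ, 0 < s →
        f (y, 0) + g y * f (0, 1) < f (q, 0) + g q * f (0, 1) + s * (-f (0, 1)) := by
      intro s hs
      have h3 := hf (y, g y + s) (by simp [hs])
      rw [hsplit y (g y + s), hsplit q (g q)] at h3
      nlinarith
    refine le_of_forall_pos_le_add fun ε hε => ?_
    have hd : (0:ℝ) < -f (0, 1) := by linarith
    have := h2 (ε / (-f (0, 1))) (div_pos hε hd)
    have he : ε / (-f (0, 1)) * (-f (0, 1)) = ε := div_mul_cancel₀ _ (ne_of_gt hd)
    linarith
  refine ⟨(-f (0, 1))⁻¹ • (f.comp (ContinuousLinearMap.inl ℝ (Fin m → ℝ) ℝ)), fun y => ?_⟩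
  have hy := key y
  have hcpos : (0:ℝ) < -f (0, 1) := by linarith
  simp only [ContinuousLinearMap.smul_apply, ContinuousLinearMap.coe_comp',
    Function.comp_apply, ContinuousLinearMap.inl_apply, smul_eq_mul]
  rw [← mul_sub, inv_mul_eq_div, div_le_iff₀ hcpos]
  nlinarith

noncomputable def hmax {α : Type*} (ℓ : ℕ → α → ℝ) : ℕ → α → ℝ
  | 0 => ℓ 0
  | (N+1) => fun y => max (hmax ℓ N y) (ℓ (N+1) y)

lemma le_hmax {α : Type*} (ℓ : ℕ → α → ℝ) {k N : ℕ} (h : k ≤ N) (y : α) :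
    ℓ k y ≤ hmax ℓ N y := by
  induction N with
  | zero => rw [Nat.le_zero] at h; subst h; simp [hmax]
  | succ N ih =>
    rcases Nat.le_succ_iff.mp h with h' | h'
    · exact le_trans (ih h') (le_max_left _ _)
    · subst h'; exact le_max_right _ _

lemma hmax_le {α : Type*} {ℓ : ℕ → α → ℝ} {c : ℝ} {y : α} (hy : ∀ k, ℓ k y ≤ c) (N : ℕ) :
    hmax ℓ N y ≤ c := by
  induction N with
  | zero => exact hy 0
  | succ N ih => exact max_le ih (hy _)

lemma exists_hmax_eq {α : Type*} (ℓ : ℕ → α → ℝ) (N : ℕ) (y : α) :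
    ∃ k ≤ N, ℓ k y = hmax ℓ N y := by
  induction N with
  | zero => exact ⟨0, le_refl 0, rfl⟩
  | succ N ih =>
    rcases le_or_gt (ℓ (N+1) y) (hmax ℓ N y) with h | h
    · obtain ⟨k, hk, hke⟩ := ih
      refine ⟨k, hk.trans (Nat.le_succ N), ?_⟩
      show ℓ k y = max (hmax ℓ N y) (ℓ (N+1) y)
      rw [max_eq_left h, hke]
    · refine ⟨N+1, le_refl _, ?_⟩
      show ℓ (N+1) y = max (hmax ℓ N y) (ℓ (N+1) y)
      rw [max_eq_right h.le]

lemma hmax_cont {α : Type*} [TopologicalSpace α] {ℓ : ℕ → α → ℝ}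
    (hc : ∀ k, Continuous (ℓ k)) (N : ℕ) : Continuous (hmax ℓ N) := by
  induction N with
  | zero => exact hc 0
  | succ N ih => exact ih.max (hc _)

lemma clm_eq_sum {m : ℕ} (b : (Fin m → ℝ) →L[ℝ] ℝ) (z : Fin m → ℝ) :
    b z = ∑ j, z j * b (Pi.single j 1) := by
  conv_lhs => rw [← Finset.univ_sum_single z, map_sum]
  refine Finset.sum_congr rfl fun j _ => ?_
  have h1 : (Pi.single j (z j) : Fin m → ℝ) = z j • (Pi.single j 1 : Fin m → ℝ) := by
    rw [← Pi.single_smul]; norm_num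
  rw [h1, b.map_smul, smul_eq_mul]

lemma liminf_aux {a b : ℕ → ℝ} {L K : ℝ} (ha : Filter.Tendsto a Filter.atTop (nhds L))
    (hab : ∀ n, a n ≤ b n) (hK : ∀ n, b n ≤ K) : L ≤ Filter.liminf b Filter.atTop := by
  rw [← ha.liminf_eq]
  exact Filter.liminf_le_liminf (Filter.Eventually.of_forall hab)
    ha.isBoundedUnder_ge (Filter.isCoboundedUnder_ge_of_le _ hK)

theorem stmt_19 (m : ℕ) (Ω : Type*) [MeasurableSpace Ω] (μ : Measure Ω)
    [IsFiniteMeasure μ] (g : (Fin m → ℝ) → ℝ)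
    (hgconv : ConvexOn ℝ Set.univ g) (hgcont : Continuous g)
    (v : ℕ → Ω → (Fin m → ℝ)) (w : Ω → (Fin m → ℝ))
    (hvm : ∀ n, Measurable (v n)) (hwm : Measurable w)
    (C : ℝ) (hvb : ∀ n, ∀ᵐ x ∂μ, ‖v n x‖ ≤ C) (hwb : ∀ᵐ x ∂μ, ‖w x‖ ≤ C)
    (hconv : ∀ φ : Ω → (Fin m → ℝ), Integrable φ μ →
      Filter.Tendsto (fun n => ∫ x, ∑ j, v n x j * φ x j ∂μ) Filter.atTop
        (nhds (∫ x, ∑ j, w x j * φ x j ∂μ))) :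
    (∫ x, g (w x) ∂μ)
      ≤ Filter.liminf (fun n => ∫ x, g (v n x) ∂μ) Filter.atTop := by
  classical
  -- bound for |g| on the ball of radius C
  obtain ⟨Kg, hKg⟩ : ∃ K, ∀ y : Fin m → ℝ, ‖y‖ ≤ C → |g y| ≤ K := by
    obtain ⟨K, hK⟩ := (isCompact_closedBall (0 : Fin m → ℝ) C).exists_bound_of_continuousOn
      hgcont.continuousOn
    exact ⟨K, fun y hy => by
      simpa [Real.norm_eq_abs] using hK y (by simpa [Metric.mem_closedBall, dist_zero_right] using hy)⟩
  have Igv : ∀ n, Integrable (fun x => g (v n x)) μ := fun n =>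
    Integrable.mono' (integrable_const Kg)
      ((hgcont.measurable.comp (hvm n)).aestronglyMeasurable)
      ((hvb n).mono fun x hx => by simpa [Real.norm_eq_abs] using hKg _ hx)
  have Ibnd : ∀ n, ∫ x, g (v n x) ∂μ ≤ Kg * (μ Set.univ).toReal := by
    intro n
    calc ∫ x, g (v n x) ∂μ ≤ ∫ _, Kg ∂μ := integral_mono_ae (Igv n) (integrable_const Kg)
          ((hvb n).mono fun x hx => (abs_le.mp (hKg _ hx)).2)
      _ = Kg * (μ Set.univ).toReal := by rw [integral_const, smul_eq_mul, mul_comm]; rfl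
  obtain ⟨D, hD⟩ := TopologicalSpace.exists_dense_seq (Fin m → ℝ)
  choose bk hbk using fun k => exists_subgrad g hgconv hgcont (D k)
  set ℓ : ℕ → (Fin m → ℝ) → ℝ := fun k y => g (D k) + (bk k y - bk k (D k)) with hℓdef
  have hℓle : ∀ k y, ℓ k y ≤ g y := fun k y => by
    have := hbk k y; simp only [hℓdef]; linarith
  have hℓcont : ∀ k, Continuous (ℓ k) := fun k => by
    simp only [hℓdef]; fun_prop
  -- pointwise convergence of hmax to g
  have hptw : ∀ y, Filter.Tendsto (fun N => hmax ℓ N y) Filter.atTop (nhds (g y)) := by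
    intro y
    rw [Metric.tendsto_atTop]
    intro ε hε
    have hcont2 : Continuous fun z : Fin m → ℝ => 2 * g z - g ((2:ℝ) • z - y) := by fun_prop
    have hval : 2 * g y - g ((2:ℝ) • y - y) = g y := by
      have h2y : (2:ℝ) • y - y = y := by rw [two_smul]; abel
      rw [h2y]; ring
    have hlt : g y - ε < 2 * g y - g ((2:ℝ) • y - y) := by rw [hval]; linarith
    have hev : ∀ᶠ z in nhds y, g y - ε < 2 * g z - g ((2:ℝ) • z - y) :=
      hcont2.continuousAt.eventually (eventually_gt_nhds hlt)
    rw [Metric.eventually_nhds_iff] at hev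
    obtain ⟨δ, hδ, hball⟩ := hev
    obtain ⟨k, hk⟩ := hD.exists_dist_lt y hδ
    refine ⟨k, fun N hN => ?_⟩
    have h1 : ℓ k y ≤ hmax ℓ N y := le_hmax ℓ hN y
    have h2 : hmax ℓ N y ≤ g y := hmax_le (fun k' => hℓle k' y) N
    have hb : bk k ((2:ℝ) • D k - y) = 2 * bk k (D k) - bk k y := by
      rw [map_sub, (bk k).map_smul, smul_eq_mul]
    have hrefl : ℓ k y = 2 * g (D k) - ℓ k ((2:ℝ) • D k - y) := by
      simp only [hℓdef, hb]; ring
    have h3 : 2 * g (D k) - g ((2:ℝ) • D k - y) ≤ ℓ k y := by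
      have := hℓle k ((2:ℝ) • D k - y); linarith
    have h4 : g y - ε < ℓ k y :=
      lt_of_lt_of_le (hball (by rw [dist_comm]; exact hk)) h3
    rw [Real.dist_eq, abs_lt]
    constructor <;> [linarith; linarith]
  -- main inequality for each N
  have main : ∀ N, ∫ x, hmax ℓ N (w x) ∂μ
      ≤ Filter.liminf (fun n => ∫ x, g (v n x) ∂μ) Filter.atTop := by
    intro N
    have hex : ∀ y, ∃ k, ℓ k y = hmax ℓ N y := fun y => by
      obtain ⟨k, _, hk⟩ := exists_hmax_eq ℓ N y; exact ⟨k, hk⟩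
    have hσspec : ∀ y, ℓ (Nat.find (hex y)) y = hmax ℓ N y := fun y => Nat.find_spec (hex y)
    set σ : (Fin m → ℝ) → ℕ := fun y => Nat.find (hex y) with hσdef
    have hσle : ∀ y, σ y ≤ N := by
      intro y
      obtain ⟨k, hkN, hk⟩ := exists_hmax_eq ℓ N y
      exact (Nat.find_le hk).trans hkN
    have hσmeas : Measurable σ :=
      measurable_find hex fun k =>
        measurableSet_eq_fun (hℓcont k).measurable (hmax_cont hℓcont N).measurable
    have hσw : Measurable fun x => σ (w x) := hσmeas.comp hwm
    set φ : Ω → Fin m → ℝ := fun x j => bk (σ (w x)) (Pi.single j 1) with hφdef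
    set c : Ω → ℝ := fun x => g (D (σ (w x))) - bk (σ (w x)) (D (σ (w x))) with hcdef
    have hkey : ∀ y z, (g (D (σ y)) - bk (σ y) (D (σ y)))
        + ∑ j, z j * bk (σ y) (Pi.single j 1) = ℓ (σ y) z := by
      intro y z
      rw [← clm_eq_sum]
      simp only [hℓdef]; ring
    have hφmeas : Measurable φ :=
      measurable_pi_lambda φ fun j =>
        (measurable_of_countable (fun k => bk k (Pi.single j 1))).comp hσw
    -- bound for φ
    set KN : ℝ := (Finset.range (N+1)).sup' ⟨0, Finset.mem_range.mpr N.succ_pos⟩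
      (fun k => ‖bk k‖) with hKNdef
    have hKN0 : 0 ≤ KN :=
      le_trans (norm_nonneg (bk 0))
        (Finset.le_sup' (fun k => ‖bk k‖) (Finset.mem_range.mpr N.succ_pos))
    have hbkKN : ∀ x, ‖bk (σ (w x))‖ ≤ KN := fun x =>
      Finset.le_sup' (fun k => ‖bk k‖)
        (Finset.mem_range.mpr (Nat.lt_succ_of_le (hσle (w x))))
    have hsingle : ∀ j : Fin m, ‖(Pi.single j 1 : Fin m → ℝ)‖ ≤ 1 := by
      intro j
      rw [pi_norm_le_iff_of_nonneg zero_le_one]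
      intro i
      rcases eq_or_ne i j with h | h <;> simp [Pi.single_apply, h]
    have hφcomp : ∀ x j, |φ x j| ≤ KN := by
      intro x j
      calc |φ x j| ≤ ‖bk (σ (w x))‖ * ‖(Pi.single j 1 : Fin m → ℝ)‖ :=
            (bk (σ (w x))).le_opNorm _
        _ ≤ KN * 1 := mul_le_mul (hbkKN x) (hsingle j) (norm_nonneg _) hKN0
        _ = KN := mul_one _
    have hφbound : ∀ x, ‖φ x‖ ≤ KN := by
      intro x
      rw [pi_norm_le_iff_of_nonneg hKN0]
      intro j
      simpa [Real.norm_eq_abs] using hφcomp x j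
    have Iφ : Integrable φ μ :=
      Integrable.mono' (integrable_const KN) hφmeas.aestronglyMeasurable
        (Filter.Eventually.of_forall hφbound)
    -- bound and integrability for c
    set CN : ℝ := (Finset.range (N+1)).sup' ⟨0, Finset.mem_range.mpr N.succ_pos⟩
      (fun k => |g (D k)| + ‖bk k‖ * ‖D k‖) with hCNdef
    have hcbound : ∀ x, ‖c x‖ ≤ CN := by
      intro x
      have h1 : |c x| ≤ |g (D (σ (w x)))| + ‖bk (σ (w x))‖ * ‖D (σ (w x))‖ := by
        refine le_trans (abs_sub _ _) ?_
        gcongr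
        exact (bk _).le_opNorm _
      rw [Real.norm_eq_abs]
      exact le_trans h1 (Finset.le_sup' (fun k => |g (D k)| + ‖bk k‖ * ‖D k‖)
        (Finset.mem_range.mpr (Nat.lt_succ_of_le (hσle (w x)))))
    have hcmeas : Measurable c :=
      (measurable_of_countable (fun k => g (D k) - bk k (D k))).comp hσw
    have Ic : Integrable c μ :=
      Integrable.mono' (integrable_const CN) hcmeas.aestronglyMeasurable
        (Filter.Eventually.of_forall hcbound)
    -- the linear part
    have hSmeas : ∀ u : Ω → Fin m → ℝ, Measurable u →
        Measurable (fun x => ∑ j, u x j * φ x j) := by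
      intro u hu
      exact Finset.measurable_sum _ fun j _ =>
        ((measurable_pi_apply j).comp hu).mul ((measurable_pi_apply j).comp hφmeas)
    have hSbound : ∀ (u : Ω → Fin m → ℝ), (∀ᵐ x ∂μ, ‖u x‖ ≤ C) →
        ∀ᵐ x ∂μ, ‖∑ j, u x j * φ x j‖ ≤ (m : ℝ) * (C * KN) := by
      intro u hu
      refine hu.mono fun x hx => ?_
      have hC0 : 0 ≤ C := le_trans (norm_nonneg _) hx
      rw [Real.norm_eq_abs]
      calc |∑ j, u x j * φ x j| ≤ ∑ j, |u x j * φ x j| := Finset.abs_sum_le_sum_abs _ _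
        _ ≤ ∑ _j : Fin m, C * KN := by
            refine Finset.sum_le_sum fun j _ => ?_
            rw [abs_mul]
            refine mul_le_mul ?_ (hφcomp x j) (abs_nonneg _) hC0
            exact le_trans (norm_le_pi_norm (u x) j) hx
        _ = (m : ℝ) * (C * KN) := by simp [Finset.sum_const, Finset.card_univ]
    have IS : ∀ n, Integrable (fun x => ∑ j, v n x j * φ x j) μ := fun n =>
      Integrable.mono' (integrable_const ((m : ℝ) * (C * KN)))
        ((hSmeas _ (hvm n)).aestronglyMeasurable) (hSbound _ (hvb n))
    have ISw : Integrable (fun x => ∑ j, w x j * φ x j) μ :=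
      Integrable.mono' (integrable_const ((m : ℝ) * (C * KN)))
        ((hSmeas _ hwm).aestronglyMeasurable) (hSbound _ hwb)
    -- the comparison for each n
    have hle : ∀ n, ∫ x, c x ∂μ + ∫ x, ∑ j, v n x j * φ x j ∂μ ≤ ∫ x, g (v n x) ∂μ := by
      intro n
      rw [← integral_add Ic (IS n)]
      refine integral_mono (Ic.add (IS n)) (Igv n) fun x => ?_
      calc c x + ∑ j, v n x j * φ x j = ℓ (σ (w x)) (v n x) := hkey (w x) (v n x)
        _ ≤ g (v n x) := hℓle _ _
    have hTend : Filter.Tendsto (fun n => ∫ x, c x ∂μ + ∫ x, ∑ j, v n x j * φ x j ∂μ)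
        Filter.atTop (nhds (∫ x, c x ∂μ + ∫ x, ∑ j, w x j * φ x j ∂μ)) :=
      tendsto_const_nhds.add (hconv φ Iφ)
    have hLval : ∫ x, c x ∂μ + ∫ x, ∑ j, w x j * φ x j ∂μ = ∫ x, hmax ℓ N (w x) ∂μ := by
      rw [← integral_add Ic ISw]
      refine integral_congr_ae (Filter.Eventually.of_forall fun x => ?_)
      calc c x + ∑ j, w x j * φ x j = ℓ (σ (w x)) (w x) := hkey (w x) (w x)
        _ = hmax ℓ N (w x) := hσspec (w x)
    rw [← hLval]
    exact liminf_aux hTend hle Ibnd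
  -- dominated convergence to conclude
  set B : ℝ := Kg ⊔ (|g (D 0)| + ‖bk 0‖ * C + ‖bk 0‖ * ‖D 0‖) with hBdef
  have hdom : Filter.Tendsto (fun N => ∫ x, hmax ℓ N (w x) ∂μ) Filter.atTop
      (nhds (∫ x, g (w x) ∂μ)) := by
    refine tendsto_integral_of_dominated_convergence (fun _ => B)
      (fun N => ((hmax_cont hℓcont N).measurable.comp hwm).aestronglyMeasurable)
      (integrable_const B) (fun N => ?_) ?_
    · refine hwb.mono fun x hx => ?_
      have hup : hmax ℓ N (w x) ≤ g (w x) := hmax_le (fun k => hℓle k (w x)) N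
      have hlo : ℓ 0 (w x) ≤ hmax ℓ N (w x) := le_hmax ℓ (Nat.zero_le N) (w x)
      have hg : |g (w x)| ≤ Kg := hKg _ hx
      have hb1 : |bk 0 (w x)| ≤ ‖bk 0‖ * C := by
        refine le_trans ((bk 0).le_opNorm _) ?_
        exact mul_le_mul_of_nonneg_left hx (norm_nonneg _)
      have hb2 : |bk 0 (D 0)| ≤ ‖bk 0‖ * ‖D 0‖ := (bk 0).le_opNorm _
      have hℓ0 : |ℓ 0 (w x)| ≤ |g (D 0)| + ‖bk 0‖ * C + ‖bk 0‖ * ‖D 0‖ := by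
        simp only [hℓdef]
        have := abs_sub (bk 0 (w x)) (bk 0 (D 0))
        have := abs_add_le (g (D 0)) (bk 0 (w x) - bk 0 (D 0))
        linarith [le_abs_self (g (D 0)), abs_nonneg (bk 0 (w x))]
      rw [Real.norm_eq_abs, abs_le]
      constructor
      · have : -(|g (D 0)| + ‖bk 0‖ * C + ‖bk 0‖ * ‖D 0‖) ≤ ℓ 0 (w x) := by
          have := (abs_le.mp hℓ0).1; linarith
        exact le_trans (neg_le_neg (le_max_right _ _)) (le_trans this hlo)
      · exact le_trans hup (le_trans (le_trans (le_abs_self _) hg) (le_max_left _ _))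
    · exact Filter.Eventually.of_forall fun x => hptw (w x)
  exact le_of_tendsto hdom (Filter.Eventually.of_forall main)
end
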